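/- Let K be a nonempty set and X a real Banach space. A function f ∈ ℓ∞(K,X) with ‖f‖ = 1 is a (ρ₊)-left symmetric point of ℓ∞(K,X) if and only if both of the following hold: (i) there exists k₀ ∈ K such that ‖f(k₀)‖ = 1 and f(k) = 0 for all k ∈ K with k ≠ k₀, and (ii) f(k₀) is a (ρ₊)-left symmetric point of X. -/

import Mathlib

open Filter Topology Set Metric NormedSpace
open scoped ENNReal

noncomputable section

/-- Birkhoff–James orthogonality: `x ⊥_B y` iff `‖x + t • y‖ ≥ ‖x‖` for all real `t`. -/
def BJOrth {E : Type*} [NormedAddCommGroup E] [NormedSpace ℝ E] (x y : E) : Prop :=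
  ∀ t : ℝ, ‖x‖ ≤ ‖x + t • y‖

/-- The norm derivative `ρ'₊(x,y) = ‖x‖ · lim_{t→0⁺} (‖x+ty‖-‖x‖)/t`. -/
def rhoPlus {E : Type*} [NormedAddCommGroup E] [NormedSpace ℝ E] (x y : E) : ℝ :=
  ‖x‖ * limUnder (𝓝[>] (0 : ℝ)) (fun t => (‖x + t • y‖ - ‖x‖) / t)

/-- The norm derivative `ρ'₋(x,y) = ‖x‖ · lim_{t→0⁻} (‖x+ty‖-‖x‖)/t`. -/
def rhoMinus {E : Type*} [NormedAddCommGroup E] [NormedSpace ℝ E] (x y : E) : ℝ :=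
  ‖x‖ * limUnder (𝓝[<] (0 : ℝ)) (fun t => (‖x + t • y‖ - ‖x‖) / t)

/-- The norm derivative `ρ'(x,y) = (ρ'₊(x,y) + ρ'₋(x,y))/2`. -/
def rhoDer {E : Type*} [NormedAddCommGroup E] [NormedSpace ℝ E] (x y : E) : ℝ :=
  (rhoPlus x y + rhoMinus x y) / 2

/-- `x` is an exposed point of the closed unit ball of `E`: there is a norm-one functional `f`
with `f x = 1` and `f u < 1` for every `u` in the ball with `u ≠ x`. -/
def ExposedPt {E : Type*} [NormedAddCommGroup E] [NormedSpace ℝ E] (x : E) : Prop :=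
  ‖x‖ ≤ 1 ∧ ∃ f : E →L[ℝ] ℝ, ‖f‖ = 1 ∧ f x = 1 ∧ ∀ u : E, ‖u‖ ≤ 1 → u ≠ x → f u < 1

set_option linter.unusedSectionVars false

namespace Stmt11Aux

section General

variable {E : Type*} [NormedAddCommGroup E] [NormedSpace ℝ E]
variable {F : Type*} [NormedAddCommGroup F] [NormedSpace ℝ F]

/-- The right difference quotient of the norm. -/
def q (x y : E) (t : ℝ) : ℝ := (‖x + t • y‖ - ‖x‖) / t

lemma q_mono (x y : E) : MonotoneOn (q x y) (Ioi (0:ℝ)) := by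
  intro s hs t ht hst
  simp only [mem_Ioi] at hs ht
  have hd1 : s / t ≤ 1 := (div_le_one ht).2 hst
  have hd0 : 0 ≤ s / t := by positivity
  have key : ‖x + s • y‖ ≤ (1 - s/t) * ‖x‖ + (s/t) * ‖x + t • y‖ := by
    have h1 : x + s • y = (1 - s/t) • x + (s/t) • (x + t • y) := by
      rw [smul_add, smul_smul, div_mul_cancel₀ _ ht.ne', ← add_assoc, ← add_smul,
        sub_add_cancel, one_smul]
    calc ‖x + s • y‖ = ‖(1 - s/t) • x + (s/t) • (x + t • y)‖ := by rw [h1]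
      _ ≤ ‖(1 - s/t) • x‖ + ‖(s/t) • (x + t • y)‖ := norm_add_le _ _
      _ = (1 - s/t) * ‖x‖ + (s/t) * ‖x + t • y‖ := by
          rw [norm_smul, norm_smul, Real.norm_eq_abs, Real.norm_eq_abs,
            abs_of_nonneg hd0, abs_of_nonneg (by linarith)]
  have hst' : s / t * t = s := div_mul_cancel₀ _ ht.ne'
  unfold q
  rw [div_le_div_iff₀ hs ht]
  nlinarith [norm_nonneg x, norm_nonneg (x + t • y)]

lemma q_lb (x y : E) {t : ℝ} (ht : 0 < t) : -‖y‖ ≤ q x y t := by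
  unfold q
  rw [le_div_iff₀ ht]
  have h1 : ‖x‖ - ‖x + t • y‖ ≤ ‖x - (x + t • y)‖ := norm_sub_norm_le _ _
  have h2 : ‖x - (x + t • y)‖ = t * ‖y‖ := by
    rw [show x - (x + t • y) = -(t • y) by abel, norm_neg, norm_smul, Real.norm_eq_abs,
      abs_of_pos ht]
  nlinarith

/-- The right derivative quotient limit. -/
def qlim (x y : E) : ℝ := limUnder (𝓝[>] (0:ℝ)) (q x y)

lemma tendsto_qlim (x y : E) : Tendsto (q x y) (𝓝[>] (0:ℝ)) (𝓝 (qlim x y)) := by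
  apply tendsto_nhds_limUnder
  refine ⟨sInf (q x y '' Ioi 0), (q_mono x y).tendsto_nhdsGT ?_⟩
  exact ⟨-‖y‖, by rintro _ ⟨t, ht, rfl⟩; exact q_lb x y ht⟩

lemma rhoPlus_def' (x y : E) : rhoPlus x y = ‖x‖ * qlim x y := rfl

lemma limUnder_congr' {α : Type*} [Nonempty α] [TopologicalSpace α] {f g : ℝ → α} {l : Filter ℝ}
    (h : f =ᶠ[l] g) : limUnder l f = limUnder l g := by
  unfold limUnder
  rw [Filter.map_congr h]

lemma rhoPlus_congr {u v : E} {x y : F} (hn : ‖u‖ = ‖x‖)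
    (h : ∀ᶠ t in 𝓝[>](0:ℝ), ‖u + t • v‖ = ‖x + t • y‖) : rhoPlus u v = rhoPlus x y := by
  unfold rhoPlus
  rw [hn]
  congr 1
  apply limUnder_congr'
  filter_upwards [h] with t ht
  rw [ht]

lemma rhoPlus_eq_mul {u v : E} {L : ℝ}
    (h : ∀ᶠ t in 𝓝[>](0:ℝ), (‖u + t • v‖ - ‖u‖)/t = L) : rhoPlus u v = ‖u‖ * L := by
  unfold rhoPlus
  congr 1
  exact Filter.Tendsto.limUnder_eq (tendsto_const_nhds.congr' (h.mono fun t ht => ht.symm))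

end General

section Lp

variable {K : Type*} [Nonempty K] {X : Type*} [NormedAddCommGroup X] [NormedSpace ℝ X]

lemma coord_le (h : lp (fun _ : K => X) ∞) (k : K) : ‖h k‖ ≤ ‖h‖ :=
  lp.norm_apply_le_norm ENNReal.top_ne_zero h k

/-- sup of norms away from `k₀` -/
def Ssup (h : lp (fun _ : K => X) ∞) (k₀ : K) : ℝ := ⨆ k : {k : K // k ≠ k₀}, ‖h (k : K)‖

lemma Ssup_nonneg (h : lp (fun _ : K => X) ∞) (k₀ : K) : 0 ≤ Ssup h k₀ :=
  Real.iSup_nonneg fun _ => norm_nonneg _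

lemma Ssup_le (h : lp (fun _ : K => X) ∞) (k₀ : K) {C : ℝ} (hC : 0 ≤ C)
    (hc : ∀ k, k ≠ k₀ → ‖h k‖ ≤ C) : Ssup h k₀ ≤ C :=
  Real.iSup_le (fun k => hc k k.2) hC

lemma le_Ssup (h : lp (fun _ : K => X) ∞) (k₀ : K) {k : K} (hk : k ≠ k₀) :
    ‖h k‖ ≤ Ssup h k₀ :=
  le_ciSup ⟨‖h‖, by rintro _ ⟨j, rfl⟩; exact coord_le h j⟩ (⟨k, hk⟩ : {k : K // k ≠ k₀})

lemma Ssup_le_norm (h : lp (fun _ : K => X) ∞) (k₀ : K) : Ssup h k₀ ≤ ‖h‖ :=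
  Ssup_le h k₀ (norm_nonneg h) fun k _ => coord_le h k

lemma norm_le_max (h : lp (fun _ : K => X) ∞) (k₀ : K) :
    ‖h‖ ≤ max ‖h k₀‖ (Ssup h k₀) := by
  apply lp.norm_le_of_forall_le (le_max_iff.2 (Or.inl (norm_nonneg _)))
  intro k
  by_cases hk : k = k₀
  · rw [hk]; exact le_max_left _ _
  · exact le_trans (le_Ssup h k₀ hk) (le_max_right _ _)

lemma coord_add_smul (u v : lp (fun _ : K => X) ∞) (t : ℝ) (k : K) :
    (u + t • v) k = u k + t • v k := by
  simp [lp.coeFn_add, lp.coeFn_smul]; rfl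

lemma Ssup_le_norm_add_smul (u v : lp (fun _ : K => X) ∞) (k₀ : K) (t : ℝ)
    (hv : ∀ k, k ≠ k₀ → v k = 0) : Ssup u k₀ ≤ ‖u + t • v‖ := by
  apply Ssup_le u k₀ (norm_nonneg _)
  intro k hk
  have : u k = (u + t • v) k := by rw [coord_add_smul, hv k hk, smul_zero, add_zero]
  rw [this]
  exact coord_le _ k

lemma norm_eq_coord (h : lp (fun _ : K => X) ∞) (k₀ : K)
    (hc : ∀ k, k ≠ k₀ → ‖h k‖ ≤ ‖h k₀‖) : ‖h‖ = ‖h k₀‖ := by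
  refine le_antisymm (lp.norm_le_of_forall_le (norm_nonneg _) fun k => ?_) (coord_le h k₀)
  by_cases hk : k = k₀
  · rw [hk]
  · exact hc k hk

lemma neg_add_smul_norm (x : X) (t : ℝ) (ht : t ≤ 1) : ‖-x + t • x‖ = (1 - t) * ‖x‖ := by
  have h1 : -x + t • x = -((1 - t) • x) := by
    rw [sub_smul, one_smul, neg_sub]
    abel
  rw [h1, norm_neg, norm_smul, Real.norm_eq_abs, abs_of_nonneg (by linarith)]

/-- The key construction: if `f k₀ ≠ 0` and the sup of the norms away from `k₀` is `1 = ‖f‖`,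
then `f` is not left-symmetric. -/
lemma master [DecidableEq K] (f : lp (fun _ : K => X) ∞) (hf : ‖f‖ = 1)
    (hsym : ∀ g : lp (fun _ : K => X) ∞, rhoPlus f g = 0 → rhoPlus g f = 0)
    (k₀ : K) (hk0 : f k₀ ≠ 0) (hS : Ssup f k₀ = 1) : False := by
  set b : ℝ := ‖f k₀‖ with hb_def
  have hb : 0 < b := norm_pos_iff.2 hk0
  have hb1 : b ≤ 1 := hf ▸ coord_le f k₀
  set g : lp (fun _ : K => X) ∞ := lp.single ∞ k₀ (-(f k₀)) with hg_def
  have hgk0 : g k₀ = -(f k₀) := lp.single_apply_self (E := fun _ : K => X) ∞ k₀ _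
  have hgk : ∀ k, k ≠ k₀ → g k = 0 := fun k hk =>
    lp.single_apply_ne (E := fun _ : K => X) ∞ k₀ _ hk
  -- step 1 : rhoPlus f g = 0
  have h1 : ∀ t ∈ Ioo (0:ℝ) 1, ‖f + t • g‖ = 1 := by
    rintro t ⟨ht0, ht1⟩
    apply le_antisymm
    · apply lp.norm_le_of_forall_le zero_le_one
      intro k
      rw [coord_add_smul]
      by_cases hk : k = k₀
      · rw [hk]
        rw [hgk0, show f k₀ + t • -f k₀ = (1 - t) • f k₀ by module]
        rw [norm_smul, Real.norm_eq_abs, abs_of_nonneg (by linarith)]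
        nlinarith
      · rw [hgk k hk, smul_zero, add_zero]
        exact hf ▸ coord_le f k
    · rw [← hS]
      exact Ssup_le_norm_add_smul f g k₀ t hgk
  have hfg : rhoPlus f g = 0 := by
    have h2 : rhoPlus f g = ‖f‖ * 0 := by
      apply rhoPlus_eq_mul
      filter_upwards [Ioo_mem_nhdsGT one_pos] with t ht
      rw [h1 t ht, hf, sub_self, zero_div]
    rw [h2, mul_zero]
  -- step 2 : ‖g‖ = b
  have hgn : ‖g‖ = b := by
    have : ‖g k₀‖ = b := by rw [hgk0, norm_neg]
    rw [← this]
    apply norm_eq_coord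
    intro k hk
    rw [hgk k hk, norm_zero]
    exact norm_nonneg _
  -- step 3 : rhoPlus g f = -b²
  have hε : 0 < b / (1 + b) := by positivity
  have h2 : ∀ t ∈ Ioo (0:ℝ) (b / (1+b)), ‖g + t • f‖ = (1 - t) * b := by
    rintro t ⟨ht0, ht1⟩
    have ht1' : t * (1 + b) < b := (lt_div_iff₀ (by linarith)).1 ht1
    have htb : t < (1 - t) * b := by nlinarith
    have ht1'' : t < 1 := by nlinarith
    have hcoord : ‖(g + t • f) k₀‖ = (1 - t) * b := by
      rw [coord_add_smul, hgk0, neg_add_smul_norm (f k₀) t ht1''.le]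
    apply le_antisymm
    · apply lp.norm_le_of_forall_le (by nlinarith)
      intro k
      by_cases hk : k = k₀
      · rw [hk]; rw [hcoord]
      · rw [coord_add_smul, hgk k hk, zero_add, norm_smul, Real.norm_eq_abs, abs_of_pos ht0]
        have hfk : ‖f k‖ ≤ 1 := hf ▸ coord_le f k
        nlinarith
    · rw [← hcoord]
      exact coord_le _ k₀
  have hgf : rhoPlus g f = b * (-b) := by
    rw [← hgn]
    apply rhoPlus_eq_mul
    filter_upwards [Ioo_mem_nhdsGT hε] with t ht
    rw [h2 t ht, hgn, div_eq_iff ht.1.ne']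
    ring
  have h0 := hsym g hfg
  rw [hgf] at h0
  nlinarith

/-- Exact transfer for functions supported at a single point. -/
lemma rho_single [DecidableEq K] (f : lp (fun _ : K => X) ∞) (k₀ : K)
    (hsupp : ∀ k, k ≠ k₀ → f k = 0) (y : X) :
    rhoPlus f (lp.single ∞ k₀ y) = rhoPlus (f k₀) y ∧
      rhoPlus (lp.single ∞ k₀ y) f = rhoPlus y (f k₀) := by
  set g : lp (fun _ : K => X) ∞ := lp.single ∞ k₀ y with hg_def
  have hgk0 : g k₀ = y := lp.single_apply_self (E := fun _ : K => X) ∞ k₀ _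
  have hgk : ∀ k, k ≠ k₀ → g k = 0 := fun k hk =>
    lp.single_apply_ne (E := fun _ : K => X) ∞ k₀ _ hk
  have hfn : ‖f‖ = ‖f k₀‖ := norm_eq_coord f k₀ fun k hk => by
    rw [hsupp k hk, norm_zero]; exact norm_nonneg _
  have hgn : ‖g‖ = ‖g k₀‖ := norm_eq_coord g k₀ fun k hk => by
    rw [hgk k hk, norm_zero]; exact norm_nonneg _
  constructor
  · apply rhoPlus_congr (hfn)
    apply Eventually.of_forall
    intro t
    have : ‖(f + t • g) k₀‖ = ‖f k₀ + t • y‖ := by rw [coord_add_smul, hgk0]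
    rw [← this]
    apply norm_eq_coord
    intro k hk
    rw [coord_add_smul, hsupp k hk, hgk k hk, smul_zero, add_zero, norm_zero]
    exact norm_nonneg _
  · rw [show rhoPlus y (f k₀) = rhoPlus (g k₀) (f k₀) by rw [hgk0]]
    apply rhoPlus_congr hgn
    apply Eventually.of_forall
    intro t
    have : ‖(g + t • f) k₀‖ = ‖g k₀ + t • f k₀‖ := by rw [coord_add_smul]
    rw [← this]
    apply norm_eq_coord
    intro k hk
    rw [coord_add_smul, hsupp k hk, hgk k hk, smul_zero, add_zero, norm_zero]
    exact norm_nonneg _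

end Lp

end Stmt11Aux

open Stmt11Aux in
theorem stmt11 {K : Type*} [Nonempty K] {X : Type*}
    [NormedAddCommGroup X] [NormedSpace ℝ X] [CompleteSpace X]
    (f : lp (fun _ : K => X) ∞) (hf : ‖f‖ = 1) :
    (∀ g : lp (fun _ : K => X) ∞, rhoPlus f g = 0 → rhoPlus g f = 0) ↔
      (∃ k₀ : K, ‖f k₀‖ = 1 ∧ (∀ k : K, k ≠ k₀ → f k = 0) ∧
        (∀ y : X, rhoPlus (f k₀) y = 0 → rhoPlus y (f k₀) = 0)) := by
  classical
  constructor
  · intro hsym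
    -- find a nonzero coordinate
    have hex : ∃ k : K, f k ≠ 0 := by
      by_contra hco
      push_neg at hco
      have : ‖f‖ ≤ 0 := lp.norm_le_of_forall_le le_rfl fun k => by rw [hco k, norm_zero]
      rw [hf] at this; linarith
    obtain ⟨k₀, hk0⟩ := hex
    have hS_le : ∀ k : K, Ssup f k ≤ 1 :=
      fun k => hf ▸ Ssup_le_norm f k
    have hSlt : Ssup f k₀ < 1 :=
      lt_of_le_of_ne (hS_le k₀) fun h => master f hf hsym k₀ hk0 h
    have hb1 : ‖f k₀‖ = 1 := by
      refine le_antisymm (hf ▸ coord_le f k₀) ?_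
      by_contra hlt
      push_neg at hlt
      have := norm_le_max f k₀
      rw [hf] at this
      rcases max_cases ‖f k₀‖ (Ssup f k₀) with ⟨h1, _⟩ | ⟨h1, _⟩ <;> rw [h1] at this <;> linarith
    have hsupp : ∀ k : K, k ≠ k₀ → f k = 0 := by
      intro k₁ hne
      by_contra hk1
      have hS1 : Ssup f k₁ = 1 := by
        refine le_antisymm (hS_le k₁) ?_
        calc (1:ℝ) = ‖f k₀‖ := hb1.symm
          _ ≤ Ssup f k₁ := le_Ssup f k₁ (fun h => hne h.symm)
      exact master f hf hsym k₁ hk1 hS1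
    refine ⟨k₀, hb1, hsupp, ?_⟩
    intro y hy
    obtain ⟨e1, e2⟩ := rho_single f k₀ hsupp y
    rw [← e2]
    exact hsym _ (by rw [e1]; exact hy)
  · rintro ⟨k₀, hb1, hsupp, hls⟩ g hfg
    have hS0 : 0 ≤ Ssup g k₀ := Ssup_nonneg g k₀
    have hfx : ‖f‖ = ‖f k₀‖ := by rw [hf, hb1]
    -- step 1 : rhoPlus f g = rhoPlus (f k₀) (g k₀)
    have hε : (0:ℝ) < 1 / (Ssup g k₀ + ‖g k₀‖ + 1) := by positivity
    have step1 : rhoPlus f g = rhoPlus (f k₀) (g k₀) := by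
      apply rhoPlus_congr hfx
      filter_upwards [Ioo_mem_nhdsGT hε] with t ht
      obtain ⟨ht0, ht1⟩ := ht
      have ht1' : t * (Ssup g k₀ + ‖g k₀‖ + 1) < 1 := (lt_div_iff₀ (by positivity)).1 ht1
      have hlow : 1 - t * ‖g k₀‖ ≤ ‖f k₀ + t • g k₀‖ := by
        have h3 := abs_norm_sub_norm_le (f k₀ + t • g k₀) (f k₀)
        have h4 : ‖f k₀ + t • g k₀ - f k₀‖ = t * ‖g k₀‖ := by
          rw [show f k₀ + t • g k₀ - f k₀ = t • g k₀ by abel, norm_smul, Real.norm_eq_abs,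
            abs_of_pos ht0]
        rw [h4, hb1] at h3
        linarith [(abs_le.1 h3).1]
      apply le_antisymm
      · apply lp.norm_le_of_forall_le (norm_nonneg _)
        intro k
        rw [coord_add_smul]
        by_cases hk : k = k₀
        · rw [hk]
        · rw [hsupp k hk, zero_add, norm_smul, Real.norm_eq_abs, abs_of_pos ht0]
          have h6 : ‖g k‖ ≤ Ssup g k₀ := le_Ssup g k₀ hk
          nlinarith [norm_nonneg (g k₀)]
      · have h8 : ‖f k₀ + t • g k₀‖ = ‖(f + t • g) k₀‖ := by rw [coord_add_smul]
        rw [h8]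
        exact coord_le _ k₀
    -- step 2 : rhoPlus (g k₀) (f k₀) = 0
    have step2 : rhoPlus (g k₀) (f k₀) = 0 := hls _ (step1 ▸ hfg)
    -- step 3 : case analysis
    rcases lt_trichotomy ‖g k₀‖ (Ssup g k₀) with hcase | hcase | hcase
    · -- a < S : ‖g‖ = S and the norm is locally constant
      have hgn : ‖g‖ = Ssup g k₀ := by
        refine le_antisymm ?_ (Ssup_le_norm g k₀)
        have := norm_le_max g k₀
        rwa [max_eq_right hcase.le] at this
      have hev : ∀ t ∈ Ioo (0:ℝ) (Ssup g k₀ - ‖g k₀‖), ‖g + t • f‖ = Ssup g k₀ := by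
        rintro t ⟨ht0, ht1⟩
        apply le_antisymm
        · apply lp.norm_le_of_forall_le hS0
          intro k
          rw [coord_add_smul]
          by_cases hk : k = k₀
          · rw [hk]
            calc ‖g k₀ + t • f k₀‖ ≤ ‖g k₀‖ + ‖t • f k₀‖ := norm_add_le _ _
              _ = ‖g k₀‖ + t * 1 := by
                  rw [norm_smul, Real.norm_eq_abs, abs_of_pos ht0, hb1]
              _ ≤ Ssup g k₀ := by linarith
          · rw [hsupp k hk, smul_zero, add_zero]
            exact le_Ssup g k₀ hk
        · exact Ssup_le_norm_add_smul g f k₀ t hsupp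
      have h9 : rhoPlus g f = ‖g‖ * 0 := by
        apply rhoPlus_eq_mul
        filter_upwards [Ioo_mem_nhdsGT (by linarith : (0:ℝ) < Ssup g k₀ - ‖g k₀‖)]
          with t ht
        rw [hev t ht, hgn, sub_self, zero_div]
      rw [h9, mul_zero]
    · -- a = S
      rcases eq_or_lt_of_le (norm_nonneg (g k₀)) with ha0 | ha0
      · -- a = S = 0 : g = 0
        have hgn : ‖g‖ = 0 := by
          refine le_antisymm ?_ (norm_nonneg _)
          have := norm_le_max g k₀
          rwa [← hcase, ← ha0, max_self] at this
        unfold rhoPlus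
        rw [hgn, zero_mul]
      · -- a = S > 0
        have hgn : ‖g‖ = ‖g k₀‖ := by
          refine le_antisymm ?_ (coord_le g k₀)
          have := norm_le_max g k₀
          rwa [← hcase, max_self] at this
        have hql : qlim (g k₀) (f k₀) = 0 := by
          have h10 := step2
          rw [rhoPlus_def'] at h10
          exact (mul_eq_zero.1 h10).resolve_left (by linarith)
        have hq0 : Tendsto (q (g k₀) (f k₀)) (𝓝[>] (0:ℝ)) (𝓝 0) :=
          hql ▸ tendsto_qlim (g k₀) (f k₀)
        have hev : ∀ᶠ t in 𝓝[>] (0:ℝ),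
            (‖g + t • f‖ - ‖g‖)/t = max (q (g k₀) (f k₀) t) 0 := by
          filter_upwards [self_mem_nhdsWithin] with t ht
          rw [mem_Ioi] at ht
          have hnorm : ‖g + t • f‖ = max ‖g k₀ + t • f k₀‖ ‖g k₀‖ := by
            apply le_antisymm
            · apply lp.norm_le_of_forall_le (le_max_iff.2 (Or.inr (norm_nonneg _)))
              intro k
              rw [coord_add_smul]
              by_cases hk : k = k₀
              · rw [hk]; exact le_max_left _ _
              · rw [hsupp k hk, smul_zero, add_zero]
                exact le_max_iff.2 (Or.inr (hcase ▸ le_Ssup g k₀ hk))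
            · apply max_le
              · have h11 : ‖g k₀ + t • f k₀‖ = ‖(g + t • f) k₀‖ := by rw [coord_add_smul]
                rw [h11]; exact coord_le _ k₀
              · rw [hcase]
                exact Ssup_le_norm_add_smul g f k₀ t hsupp
          rw [hnorm, hgn]
          unfold q
          rcases le_total ‖g k₀ + t • f k₀‖ ‖g k₀‖ with hle | hle
          · rw [max_eq_right hle, sub_self, zero_div,
              max_eq_right (div_nonpos_of_nonpos_of_nonneg (by linarith) ht.le)]
          · rw [max_eq_left hle, max_eq_left (div_nonneg (by linarith) ht.le)]
        have htend : Tendsto (fun t => (‖g + t • f‖ - ‖g‖)/t) (𝓝[>] (0:ℝ)) (𝓝 0) := by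
          have h7 : Tendsto (fun t => max (q (g k₀) (f k₀) t) 0) (𝓝[>] (0:ℝ)) (𝓝 0) := by
            have h12 := hq0.max ((tendsto_const_nhds : Tendsto (fun _ : ℝ => (0:ℝ)) (𝓝[>] (0:ℝ)) (𝓝 0)))
            rwa [max_self] at h12
          exact h7.congr' (hev.mono fun t ht => ht.symm)
        unfold rhoPlus
        rw [htend.limUnder_eq, mul_zero]
    · -- a > S : ‖g‖ = a and rhoPlus g f = rhoPlus (g k₀) (f k₀)
      have hgn : ‖g‖ = ‖g k₀‖ := by
        refine le_antisymm ?_ (coord_le g k₀)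
        have := norm_le_max g k₀
        rwa [max_eq_left hcase.le] at this
      have step3 : rhoPlus g f = rhoPlus (g k₀) (f k₀) := by
        apply rhoPlus_congr hgn
        filter_upwards [Ioo_mem_nhdsGT
          (by linarith : (0:ℝ) < ‖g k₀‖ - Ssup g k₀)] with t ht
        obtain ⟨ht0, ht1⟩ := ht
        have hlow : ‖g k₀‖ - t ≤ ‖g k₀ + t • f k₀‖ := by
          have h3 := abs_norm_sub_norm_le (g k₀ + t • f k₀) (g k₀)
          have h4 : ‖g k₀ + t • f k₀ - g k₀‖ = t := by
            rw [show g k₀ + t • f k₀ - g k₀ = t • f k₀ by abel, norm_smul, Real.norm_eq_abs,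
              abs_of_pos ht0, hb1, mul_one]
          rw [h4] at h3
          linarith [(abs_le.1 h3).1]
        apply le_antisymm
        · apply lp.norm_le_of_forall_le (norm_nonneg _)
          intro k
          rw [coord_add_smul]
          by_cases hk : k = k₀
          · rw [hk]
          · rw [hsupp k hk, smul_zero, add_zero]
            have := le_Ssup g k₀ hk
            linarith
        · have h13 : ‖g k₀ + t • f k₀‖ = ‖(g + t • f) k₀‖ := by rw [coord_add_smul]
          rw [h13]
          exact coord_le _ k₀
      rw [step3, step2]
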